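/- Let A be a non-unital ℂ-algebra and suppose there exists a ℂ-linear map σ : A → A ⊗ A such that μ ∘ σ = id_A (where μ is multiplication) and σ is a map of right A-modules (σ(ab) = σ(a)·b where A ⊗ A is a right A-module via the second factor). Then the canonical map A ⊗_A A → A is surjective, and if additionally there is a right-A-linear map τ : ker(μ) → A ⊗ A ⊗ A splitting the bar differential, then A ⊗_A A → A is an isomorphism, i.e., A is quasi-unital. -/

import Mathlib

open TensorProduct LinearMap

variable (A : Type) [NonUnitalRing A] [Module ℂ A] [SMulCommClass ℂ A A]
  [IsScalarTower ℂ A A]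

/-- The bar differential `A ⊗ A ⊗ A → A ⊗ A`: `(μ ⊗ id) − (id ⊗ μ)`. -/
noncomputable def barD : (A ⊗[ℂ] (A ⊗[ℂ] A)) →ₗ[ℂ] A ⊗[ℂ] A :=
  (rTensor A (mul' ℂ A)) ∘ₗ (TensorProduct.assoc ℂ A A A).symm.toLinearMap
    - lTensor A (mul' ℂ A)

/-- The right `A`-action on `A ⊗ A` via the second factor. -/
noncomputable def ρ₂ (b : A) : A ⊗[ℂ] A →ₗ[ℂ] A ⊗[ℂ] A :=
  lTensor A (mulRight ℂ b)

/-- The right `A`-action on `A ⊗ A ⊗ A` via the last factor. -/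
noncomputable def ρ₃ (b : A) : A ⊗[ℂ] (A ⊗[ℂ] A) →ₗ[ℂ] A ⊗[ℂ] (A ⊗[ℂ] A) :=
  lTensor A (lTensor A (mulRight ℂ b))

/-- Suppose `σ : A → A ⊗ A` is a right-`A`-linear linear section of the multiplication
`μ`.  Then the canonical map `A ⊗_A A → A` is surjective; and if moreover the bar
differential admits a right-`A`-linear splitting `τ` on `ker μ`, then `A ⊗_A A → A`
is an isomorphism, i.e. `A` is quasi-unital. -/
theorem quasiUnital_of_sections
    (σ : A →ₗ[ℂ] A ⊗[ℂ] A)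
    (hσ₁ : (mul' ℂ A) ∘ₗ σ = LinearMap.id)
    (hσ₂ : ∀ a b : A, σ (a * b) = ρ₂ A b (σ a)) :
    (∀ f : ((A ⊗[ℂ] A) ⧸ LinearMap.range (barD A)) →ₗ[ℂ] A,
      f ∘ₗ (LinearMap.range (barD A)).mkQ = mul' ℂ A → Function.Surjective f) ∧
    ((∃ τ : A ⊗[ℂ] A →ₗ[ℂ] A ⊗[ℂ] (A ⊗[ℂ] A),
        (∀ x ∈ LinearMap.ker (mul' ℂ A), barD A (τ x) = x) ∧
        (∀ x ∈ LinearMap.ker (mul' ℂ A), ∀ b : A, τ (ρ₂ A b x) = ρ₃ A b (τ x))) →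
      ∀ f : ((A ⊗[ℂ] A) ⧸ LinearMap.range (barD A)) →ₗ[ℂ] A,
        f ∘ₗ (LinearMap.range (barD A)).mkQ = mul' ℂ A → Function.Bijective f) := by
  have hsurj : ∀ f : ((A ⊗[ℂ] A) ⧸ LinearMap.range (barD A)) →ₗ[ℂ] A,
      f ∘ₗ (LinearMap.range (barD A)).mkQ = mul' ℂ A → Function.Surjective f := by
    intro f hf a
    refine ⟨(LinearMap.range (barD A)).mkQ (σ a), ?_⟩
    have := congrArg (fun g => g (σ a)) hf
    simp only [LinearMap.comp_apply] at this
    have h1 := congrArg (fun g => g a) hσ₁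
    simp only [LinearMap.comp_apply, LinearMap.id_apply] at h1
    rw [show f ((LinearMap.range (barD A)).mkQ (σ a)) = mul' ℂ A (σ a) from this]
    exact h1
  refine ⟨hsurj, ?_⟩
  rintro ⟨τ, hτ₁, _⟩ f hf
  refine ⟨?_, hsurj f hf⟩
  rw [← LinearMap.ker_eq_bot]
  rw [Submodule.eq_bot_iff]
  intro z hz
  obtain ⟨y, rfl⟩ := Submodule.mkQ_surjective _ z
  have hmul : mul' ℂ A y = 0 := by
    have := congrArg (fun g => g y) hf
    simp only [LinearMap.comp_apply] at this
    rw [← this]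
    exact hz
  have hker : y ∈ LinearMap.ker (mul' ℂ A) := hmul
  have : y ∈ LinearMap.range (barD A) := ⟨τ y, hτ₁ y hker⟩
  simpa [Submodule.Quotient.mk_eq_zero] using this
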